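/- Let X be a real Banach space with continuous dual X*, let q > 1, N ∈ ℕ, x* ∈ X*, u_1*, ..., u_N* ∈ X*, and α_1, ..., α_N ∈ ℝ. Then the function h : ℝ^N → ℝ defined by h(t) = (1/q)‖x* − Σ_{k=1}^N t_k u_k*‖^q + Σ_{k=1}^N t_k α_k is convex. If moreover the functionals u_1*, ..., u_N* are linearly independent and the norm of X* is strictly convex (X* is a strictly convex normed space), then h is strictly convex. -/

import Mathlib

open Set

/-- `y ↦ ‖y‖ ^ q` is convex for `q > 1` (real power). -/
lemma convexOn_norm_rpow_aux {E : Type*} [NormedAddCommGroup E] [NormedSpace ℝ E]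
    {q : ℝ} (hq : 1 < q) : ConvexOn ℝ Set.univ (fun y : E => ‖y‖ ^ q) := by
  refine ⟨convex_univ, fun x _ y _ a b ha hb hab => ?_⟩
  calc ‖a • x + b • y‖ ^ q ≤ (a * ‖x‖ + b * ‖y‖) ^ q := by
        apply Real.rpow_le_rpow (norm_nonneg _)
        · calc ‖a • x + b • y‖ ≤ ‖a • x‖ + ‖b • y‖ := norm_add_le _ _
            _ = a * ‖x‖ + b * ‖y‖ := by
              rw [norm_smul, norm_smul, Real.norm_of_nonneg ha, Real.norm_of_nonneg hb]
        · exact (zero_lt_one.trans hq).le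
    _ ≤ a * ‖x‖ ^ q + b * ‖y‖ ^ q :=
        (convexOn_rpow (le_of_lt hq)).2 (norm_nonneg x) (norm_nonneg y) ha hb hab

/-- `y ↦ ‖y‖ ^ q` is strictly convex for `q > 1` on a strictly convex space. -/
lemma strictConvexOn_norm_rpow_aux {E : Type*} [NormedAddCommGroup E] [NormedSpace ℝ E]
    [StrictConvexSpace ℝ E] {q : ℝ} (hq : 1 < q) :
    StrictConvexOn ℝ Set.univ (fun y : E => ‖y‖ ^ q) := by
  refine ⟨convex_univ, fun x _ y _ hxy a b ha hb hab => ?_⟩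
  by_cases hn : ‖x‖ = ‖y‖
  · have hr : 0 < ‖x‖ := by
      rcases lt_or_eq_of_le (norm_nonneg x) with h | h
      · exact h
      · exfalso
        apply hxy
        have hx0 : x = 0 := norm_eq_zero.mp h.symm
        have hy0 : y = 0 := norm_eq_zero.mp (hn ▸ h.symm)
        rw [hx0, hy0]
    have hlt : ‖a • x + b • y‖ < ‖x‖ :=
      norm_combo_lt_of_ne le_rfl (le_of_eq hn.symm) hxy ha hb hab
    calc ‖a • x + b • y‖ ^ q < ‖x‖ ^ q :=
          Real.rpow_lt_rpow (norm_nonneg _) hlt (lt_trans zero_lt_one hq)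
      _ = a * ‖x‖ ^ q + b * ‖y‖ ^ q := by rw [← hn, ← add_mul, hab, one_mul]
  · calc ‖a • x + b • y‖ ^ q ≤ (a * ‖x‖ + b * ‖y‖) ^ q := by
          apply Real.rpow_le_rpow (norm_nonneg _)
          · calc ‖a • x + b • y‖ ≤ ‖a • x‖ + ‖b • y‖ := norm_add_le _ _
              _ = a * ‖x‖ + b * ‖y‖ := by
                rw [norm_smul, norm_smul, Real.norm_of_nonneg ha.le, Real.norm_of_nonneg hb.le]
          · exact (zero_lt_one.trans hq).le
      _ < a * ‖x‖ ^ q + b * ‖y‖ ^ q :=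
          (strictConvexOn_rpow hq).2 (norm_nonneg x) (norm_nonneg y) hn ha hb hab

/-- Affine identity for the map `t ↦ xs - ∑ k, t k • u k`. -/
lemma affine_combo_aux {E : Type*} [NormedAddCommGroup E] [NormedSpace ℝ E]
    {N : ℕ} (xs : E) (u : Fin N → E) (x y : Fin N → ℝ) {a b : ℝ} (hab : a + b = 1) :
    xs - ∑ k, (a • x + b • y) k • u k
      = a • (xs - ∑ k, x k • u k) + b • (xs - ∑ k, y k • u k) := by
  have hsum : ∑ k, (a • x + b • y) k • u k
      = a • ∑ k, x k • u k + b • ∑ k, y k • u k := by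
    rw [Finset.smul_sum, Finset.smul_sum, ← Finset.sum_add_distrib]
    refine Finset.sum_congr rfl fun k _ => ?_
    simp [add_smul, smul_smul]
  rw [hsum, smul_sub, smul_sub]
  have hx : a • xs + b • xs = xs := by rw [← add_smul, hab, one_smul]
  conv_lhs => rw [← hx]
  abel

/-- The function `h(t) = (1/q)‖x* − Σ_k t_k u_k*‖^q + Σ_k t_k α_k` arising in the
computation of the Bregman projection onto an intersection of hyperplanes is
convex; it is strictly convex if the functionals `u_k*` are linearly independent
and the dual norm is strictly convex. -/
theorem bregman_projection_objective_convex
    {X : Type*} [NormedAddCommGroup X] [NormedSpace ℝ X] [CompleteSpace X]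
    (q : ℝ) (hq : 1 < q) (N : ℕ) (xs : StrongDual ℝ X)
    (u : Fin N → StrongDual ℝ X) (α : Fin N → ℝ) :
    ConvexOn ℝ Set.univ (fun t : Fin N → ℝ =>
      (1 / q) * ‖xs - ∑ k, t k • u k‖ ^ q + ∑ k, t k * α k) ∧
    (LinearIndependent ℝ u → StrictConvexSpace ℝ (StrongDual ℝ X) →
      StrictConvexOn ℝ Set.univ (fun t : Fin N → ℝ =>
        (1 / q) * ‖xs - ∑ k, t k • u k‖ ^ q + ∑ k, t k * α k)) := by
  have hq0 : 0 < 1 / q := by positivity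
  have hlin : ∀ (x y : Fin N → ℝ) (a b : ℝ), a + b = 1 →
      ∑ k, (a • x + b • y) k * α k
        = a * ∑ k, x k * α k + b * ∑ k, y k * α k := by
    intro x y a b hab
    rw [Finset.mul_sum, Finset.mul_sum, ← Finset.sum_add_distrib]
    refine Finset.sum_congr rfl fun k _ => ?_
    simp [add_mul, mul_assoc]
  constructor
  · refine ⟨convex_univ, fun x hx y hy a b ha hb hab => ?_⟩
    simp only
    rw [affine_combo_aux xs u x y hab, hlin x y a b hab]
    have := (convexOn_norm_rpow_aux (E := StrongDual ℝ X) hq).2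
      (mem_univ (xs - ∑ k, x k • u k)) (mem_univ (xs - ∑ k, y k • u k)) ha hb hab
    simp only [smul_eq_mul] at this ⊢
    nlinarith [mul_le_mul_of_nonneg_left this hq0.le]
  · intro hind hsc
    refine ⟨convex_univ, fun x hx y hy hxy a b ha hb hab => ?_⟩
    simp only
    rw [affine_combo_aux xs u x y hab, hlin x y a b hab]
    have hne : xs - ∑ k, x k • u k ≠ xs - ∑ k, y k • u k := by
      intro h
      apply hxy
      have h2 : ∑ k, (x k - y k) • u k = 0 := by
        have h3 : ∑ k, x k • u k = ∑ k, y k • u k := by rwa [sub_right_inj] at h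
        rw [← sub_eq_zero] at h3
        rw [← h3, ← Finset.sum_sub_distrib]
        refine Finset.sum_congr rfl fun k _ => ?_
        exact sub_smul (x k) (y k) (u k)
      have := Fintype.linearIndependent_iff.mp hind (fun k => x k - y k) h2
      funext k
      have h4 := this k
      linarith
    have := (strictConvexOn_norm_rpow_aux (E := StrongDual ℝ X) hq).2
      (mem_univ (xs - ∑ k, x k • u k)) (mem_univ (xs - ∑ k, y k • u k)) hne ha hb hab
    simp only [smul_eq_mul] at this ⊢
    nlinarith [mul_lt_mul_of_pos_left this hq0]
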